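/- Any two closed, equally-typed PCF_dp programs that both diverge are contextually congruent. -/

import Mathlib

/-!  A formalization of the meta-programming language PCF_dp (Davies–Pfenning style
quasi-quotation over call-by-value PCF), with small-step reduction, typing with a
modal context, contexts, contextual (pre)congruence, models, and a shallow
semantics for the program logic's formulae and judgements. -/

namespace PCFdp

/-- Types of PCF_dp: base types, functions, and code types `⟨α⟩`. -/
inductive Ty : Type
  | unit | bool | int
  | arrow (a b : Ty)
  | code (a : Ty)
deriving DecidableEq

/-- Terms of PCF_dp. `quote M` is the quasi-quote `⟨M⟩`, and
`letq x M N` is `let ⟨x⟩ = M in N`. `fix g x α β M` is `μg.λx^α.M`. -/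
inductive Tm : Type
  | var (x : ℕ)
  | cunit
  | cbool (b : Bool)
  | cint (n : ℤ)
  | lam (x : ℕ) (α : Ty) (M : Tm)
  | fix (g x : ℕ) (α β : Ty) (M : Tm)
  | app (M N : Tm)
  | add (M N : Tm)
  | ifte (M N N' : Tm)
  | quote (M : Tm)
  | letq (x : ℕ) (M N : Tm)
deriving DecidableEq

/-- Values: constants, abstractions, recursive abstractions, and all quasi-quotes. -/
inductive IsValue : Tm → Prop
  | cunit : IsValue .cunit
  | cbool (b) : IsValue (.cbool b)
  | cint (n) : IsValue (.cint n)
  | lam (x α M) : IsValue (.lam x α M)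
  | fix (g x α β M) : IsValue (.fix g x α β M)
  | quote (M) : IsValue (.quote M)

/-- Substitution `M[N/x]` (substituted terms are closed in all uses below). -/
def subst (x : ℕ) (N : Tm) : Tm → Tm
  | .var y => if y = x then N else .var y
  | .cunit => .cunit
  | .cbool b => .cbool b
  | .cint n => .cint n
  | .lam y α M => if y = x then .lam y α M else .lam y α (subst x N M)
  | .fix g y α β M => if g = x ∨ y = x then .fix g y α β M else .fix g y α β (subst x N M)
  | .app M M' => .app (subst x N M) (subst x N M')
  | .add M M' => .add (subst x N M) (subst x N M')
  | .ifte M M₁ M₂ => .ifte (subst x N M) (subst x N M₁) (subst x N M₂)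
  | .quote M => .quote (subst x N M)
  | .letq y M M' => .letq y (subst x N M) (if y = x then M' else subst x N M')

/-- Call-by-value small-step reduction, with the redexes of PCF plus
`let ⟨x⟩ = ⟨M⟩ in N → N[M/x]`, closed under evaluation contexts. -/
inductive Step : Tm → Tm → Prop
  | beta {x α M V} : IsValue V → Step (.app (.lam x α M) V) (subst x V M)
  | betaFix {g x α β M V} : IsValue V →
      Step (.app (.fix g x α β M) V) (subst x V (subst g (.fix g x α β M) M))
  | iteT {N N'} : Step (.ifte (.cbool true) N N') N
  | iteF {N N'} : Step (.ifte (.cbool false) N N') N'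
  | addC {m n} : Step (.add (.cint m) (.cint n)) (.cint (m + n))
  | letqQ {x M N} : Step (.letq x (.quote M) N) (subst x M N)
  | appL {M M' N} : Step M M' → Step (.app M N) (.app M' N)
  | appR {V N N'} : IsValue V → Step N N' → Step (.app V N) (.app V N')
  | addL {M M' N} : Step M M' → Step (.add M N) (.add M' N)
  | addR {V N N'} : IsValue V → Step N N' → Step (.add V N) (.add V N')
  | ifteC {M M' N N'} : Step M M' → Step (.ifte M N N') (.ifte M' N N')
  | letqL {x M M' N} : Step M M' → Step (.letq x M N) (.letq x M' N)

/-- Many-step reduction `→*`. -/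
def Steps : Tm → Tm → Prop := Relation.ReflTransGen Step

/-- `M ⇓ V`: evaluation to a value. -/
def Evals (M V : Tm) : Prop := Steps M V ∧ IsValue V

/-- `M ⇓`: convergence. -/
def Conv (M : Tm) : Prop := ∃ V, Evals M V

/-- `M ⇑`: divergence. -/
def Div (M : Tm) : Prop := ¬ Conv M

/-- Typing environments: partial maps from variables to types. -/
def Env : Type := ℕ → Option Ty
def Env.empty : Env := fun _ => none
def Env.update (Γ : Env) (x : ℕ) (α : Ty) : Env := fun y => if y = x then some α else Γ y

/-- The typing judgement `Γ; Δ ⊢ M : α` with non-modal context `Γ` and modal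
context `Δ`.  Free variables of quasi-quoted code must be modal; unquote binds
a modal variable. -/
inductive Types : Env → Env → Tm → Ty → Prop
  | varN {Γ Δ : Env} {x α} : Γ x = some α → Types Γ Δ (.var x) α
  | varM {Γ Δ : Env} {x α} : Δ x = some α → Types Γ Δ (.var x) α
  | cunit {Γ Δ} : Types Γ Δ .cunit .unit
  | cbool {Γ Δ b} : Types Γ Δ (.cbool b) .bool
  | cint {Γ Δ n} : Types Γ Δ (.cint n) .int
  | lam {Γ Δ x α β M} : Types (Env.update Γ x α) Δ M β → Types Γ Δ (.lam x α M) (.arrow α β)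
  | fix {Γ Δ g x α β M} :
      Types (Env.update (Env.update Γ g (.arrow α β)) x α) Δ M β →
      Types Γ Δ (.fix g x α β M) (.arrow α β)
  | app {Γ Δ M N α β} : Types Γ Δ M (.arrow α β) → Types Γ Δ N α → Types Γ Δ (.app M N) β
  | add {Γ Δ M N} : Types Γ Δ M .int → Types Γ Δ N .int → Types Γ Δ (.add M N) .int
  | ifte {Γ Δ M N N' α} : Types Γ Δ M .bool → Types Γ Δ N α → Types Γ Δ N' α →
      Types Γ Δ (.ifte M N N') α
  | quote {Γ Δ M α} : Types Env.empty Δ M α → Types Γ Δ (.quote M) (.code α)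
  | letq {Γ Δ x M N α β} : Types Γ Δ M (.code α) → Types Γ (Env.update Δ x α) N β →
      Types Γ Δ (.letq x M N) β

/-- `M` is a closed program of type `α`. -/
def Closed (M : Tm) (α : Ty) : Prop := Types Env.empty Env.empty M α

/-- Term contexts (terms with one hole). -/
inductive Ctx : Type
  | hole
  | lamC (x : ℕ) (α : Ty) (C : Ctx)
  | fixC (g x : ℕ) (α β : Ty) (C : Ctx)
  | appL (C : Ctx) (N : Tm)
  | appR (M : Tm) (C : Ctx)
  | addL (C : Ctx) (N : Tm)
  | addR (M : Tm) (C : Ctx)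
  | ifteC (C : Ctx) (N N' : Tm)
  | ifteL (M : Tm) (C : Ctx) (N' : Tm)
  | ifteR (M N : Tm) (C : Ctx)
  | quoteC (C : Ctx)
  | letqL (x : ℕ) (C : Ctx) (N : Tm)
  | letqR (x : ℕ) (M : Tm) (C : Ctx)

/-- Plugging a term into a context. -/
def Ctx.plug : Ctx → Tm → Tm
  | .hole, M => M
  | .lamC x α C, M => .lam x α (C.plug M)
  | .fixC g x α β C, M => .fix g x α β (C.plug M)
  | .appL C N, M => .app (C.plug M) N
  | .appR L C, M => .app L (C.plug M)
  | .addL C N, M => .add (C.plug M) N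
  | .addR L C, M => .add L (C.plug M)
  | .ifteC C N N', M => .ifte (C.plug M) N N'
  | .ifteL L C N', M => .ifte L (C.plug M) N'
  | .ifteR L N C, M => .ifte L N (C.plug M)
  | .quoteC C, M => .quote (C.plug M)
  | .letqL x C N, M => .letq x (C.plug M) N
  | .letqR x L C, M => .letq x L (C.plug M)

/-- Contextual precongruence `M ≲ N`: for every closing context `C` of type
`Unit` (for both terms), convergence of `C[M]` implies convergence of `C[N]`. -/
def Prec (M N : Tm) : Prop :=
  ∀ C : Ctx, Closed (C.plug M) .unit → Closed (C.plug N) .unit →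
    Conv (C.plug M) → Conv (C.plug N)

/-- Contextual congruence `M ≃ N`, i.e. `≲ ∩ ≲⁻¹`. -/
def Cong (M N : Tm) : Prop := Prec M N ∧ Prec N M

/-- Partial substitutions (used as the two components of a model). -/
def Sub : Type := ℕ → Option Tm
def Sub.remove (ρ : Sub) (x : ℕ) : Sub := fun y => if y = x then none else ρ y
def Sub.update (ρ : Sub) (x : ℕ) (M : Tm) : Sub := fun y => if y = x then some M else ρ y

/-- Simultaneous substitution of (closed) terms for free variables. -/
def msubst (ρ : Sub) : Tm → Tm
  | .var x => (ρ x).getD (.var x)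
  | .cunit => .cunit
  | .cbool b => .cbool b
  | .cint n => .cint n
  | .lam x α M => .lam x α (msubst (ρ.remove x) M)
  | .fix g x α β M => .fix g x α β (msubst ((ρ.remove g).remove x) M)
  | .app M N => .app (msubst ρ M) (msubst ρ N)
  | .add M N => .add (msubst ρ M) (msubst ρ N)
  | .ifte M N N' => .ifte (msubst ρ M) (msubst ρ N) (msubst ρ N')
  | .quote M => .quote (msubst ρ M)
  | .letq x M N => .letq x (msubst ρ M) (msubst (ρ.remove x) N)

/-- A model of type `Γ; Δ`: `ξ` maps the non-modal variables to closed values of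
the right types, `σ` maps the modal variables to closed (possibly diverging)
programs of the right types. -/
structure Model (Γ Δ : Env) : Type where
  ξ : Sub
  σ : Sub
  ξ_dom : ∀ x, (Γ x).isSome ↔ (ξ x).isSome
  ξ_typed : ∀ x α V, Γ x = some α → ξ x = some V → IsValue V ∧ Closed V α
  σ_dom : ∀ x, (Δ x).isSome ↔ (σ x).isSome
  σ_typed : ∀ x α M, Δ x = some α → σ x = some M → Closed M α

/-- The combined substitution `ξ ∪ σ` of a model. -/
def Model.sub {Γ Δ : Env} (η : Model Γ Δ) : Sub :=
  fun x => match η.ξ x with | some V => some V | none => η.σ x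

/-- The closure `Mη` of a term by a model. -/
def Model.close {Γ Δ : Env} (η : Model Γ Δ) (M : Tm) : Tm := msubst η.sub M

/-- Denotation of a variable in a model given as a pair of substitutions. -/
def lookup (ξ σ : Sub) (u : ℕ) : Option Tm :=
  match ξ u with | some V => some V | none => σ u

/-- Formulae of the logic, represented semantically by their satisfaction
predicate on models `(ξ, σ)`. -/
def Form : Type := Sub → Sub → Prop

/-- Semantics of the code-evaluation predicate `⟨u⟩↘m.A`: the denotation of `u`
evaluates to a quasi-quote `⟨M⟩`, `M ⇓ V`, and `A` holds with the modal anchor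
`m` bound to `V`. -/
def CodeEval (u m : ℕ) (A : Form) : Form := fun ξ σ =>
  ∃ U M V, lookup ξ σ u = some U ∧ Evals U (.quote M) ∧ Evals M V ∧ A ξ (σ.update m V)

/-- Validity of the total-correctness judgement `{A} M :_u {B}`
(anchor `u` non-modal). -/
def Valid (Γ Δ : Env) (A : Form) (M : Tm) (u : ℕ) (B : Form) : Prop :=
  ∀ η : Model Γ Δ, A η.ξ η.σ →
    ∃ V, Evals (η.close M) V ∧ B (η.ξ.update u V) η.σ

/-- Validity of a total-correctness judgement whose anchor is placed modally. -/
def ValidM (Γ Δ : Env) (A : Form) (M : Tm) (m : ℕ) (B : Form) : Prop :=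
  ∀ η : Model Γ Δ, A η.ξ η.σ →
    ∃ V, Evals (η.close M) V ∧ B η.ξ (η.σ.update m V)


/-! ### Auxiliary development for Statement 3 -/

/-- Free variables of a term. -/
def fv : Tm → Finset ℕ
  | .var x => {x}
  | .cunit => ∅
  | .cbool _ => ∅
  | .cint _ => ∅
  | .lam x _ M => fv M \ {x}
  | .fix g x _ _ M => fv M \ {g, x}
  | .app M N => fv M ∪ fv N
  | .add M N => fv M ∪ fv N
  | .ifte M N N' => fv M ∪ fv N ∪ fv N'
  | .quote M => fv M
  | .letq x M N => fv M ∪ (fv N \ {x})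

theorem subst_fresh (x : ℕ) (N : Tm) : ∀ M : Tm, x ∉ fv M → subst x N M = M := by
  intro M
  induction M with
  | var y =>
    intro h; simp [fv] at h
    simp only [subst]; rw [if_neg (fun e => h e.symm)]
  | cunit => intro _; rfl
  | cbool b => intro _; rfl
  | cint n => intro _; rfl
  | lam y α M ih =>
    intro h; simp [fv] at h
    by_cases hy : y = x
    · simp [subst, hy]
    · have hM : x ∉ fv M := fun hx => hy (h hx).symm
      simp [subst, hy, ih hM]
  | fix g y α β M ih =>
    intro h; simp [fv] at h
    by_cases hg : g = x
    · simp [subst, hg]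
    · by_cases hy : y = x
      · simp [subst, hy]
      · have hM : x ∉ fv M := fun hx => hy (h hx (fun e => hg e.symm)).symm
        simp [subst, hg, hy, ih hM]
  | app M M' ih ih' =>
    intro h; simp [fv, not_or] at h; obtain ⟨h1, h2⟩ := h
    simp [subst, ih h1, ih' h2]
  | add M M' ih ih' =>
    intro h; simp [fv, not_or] at h; obtain ⟨h1, h2⟩ := h
    simp [subst, ih h1, ih' h2]
  | ifte M M₁ M₂ ih ih₁ ih₂ =>
    intro h; simp [fv, not_or] at h; obtain ⟨h1, h2, h3⟩ := h
    simp [subst, ih h1, ih₁ h2, ih₂ h3]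
  | quote M ih =>
    intro h; simp [fv] at h; simp [subst, ih h]
  | letq y M M' ih ih' =>
    intro h; simp [fv, not_or] at h; obtain ⟨h1, h2⟩ := h
    by_cases hy : y = x
    · simp [subst, hy, ih h1]
    · have hM' : x ∉ fv M' := fun hx => hy (h2 hx).symm
      simp [subst, hy, ih h1, ih' hM']

theorem fv_subst_mem (x : ℕ) (N : Tm) :
    ∀ M : Tm, ∀ z ∈ fv (subst x N M), (z ∈ fv M ∧ z ≠ x) ∨ z ∈ fv N := by
  intro M
  induction M with
  | var y =>
    intro z hz
    by_cases hy : y = x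
    · simp only [subst, if_pos hy] at hz; exact Or.inr hz
    · simp only [subst, if_neg hy] at hz
      simp [fv] at hz; subst hz
      exact Or.inl ⟨by simp [fv], fun e => hy (e ▸ rfl)⟩
  | cunit => intro z hz; simp [subst, fv] at hz
  | cbool b => intro z hz; simp [subst, fv] at hz
  | cint n => intro z hz; simp [subst, fv] at hz
  | lam y α M ih =>
    intro z hz
    by_cases hy : y = x
    · simp only [subst, if_pos hy] at hz
      subst hy
      simp [fv] at hz ⊢; tauto
    · simp only [subst, if_neg hy] at hz
      simp [fv] at hz ⊢
      obtain ⟨hz1, hz2⟩ := hz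
      rcases ih z hz1 with ⟨h1, h2⟩ | h1 <;> tauto
  | fix g y α β M ih =>
    intro z hz
    by_cases hgy : g = x ∨ y = x
    · simp only [subst, if_pos hgy] at hz
      simp [fv] at hz ⊢
      rcases hgy with h | h <;> subst h <;> tauto
    · simp only [subst, if_neg hgy] at hz
      simp [fv] at hz ⊢
      obtain ⟨hz1, hz2, hz3⟩ := hz
      rcases ih z hz1 with ⟨h1, h2⟩ | h1 <;> tauto
  | app M M' ih ih' =>
    intro z hz
    simp only [subst, fv, Finset.mem_union] at hz ⊢
    rcases hz with hz | hz
    · rcases ih z hz with h | h <;> tauto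
    · rcases ih' z hz with h | h <;> tauto
  | add M M' ih ih' =>
    intro z hz
    simp only [subst, fv, Finset.mem_union] at hz ⊢
    rcases hz with hz | hz
    · rcases ih z hz with h | h <;> tauto
    · rcases ih' z hz with h | h <;> tauto
  | ifte M M₁ M₂ ih ih₁ ih₂ =>
    intro z hz
    simp only [subst, fv, Finset.mem_union] at hz ⊢
    rcases hz with (hz | hz) | hz
    · rcases ih z hz with h | h <;> tauto
    · rcases ih₁ z hz with h | h <;> tauto
    · rcases ih₂ z hz with h | h <;> tauto
  | quote M ih =>
    intro z hz
    simp only [subst, fv] at hz ⊢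
    exact ih z hz
  | letq y M M' ih ih' =>
    intro z hz
    by_cases hy : y = x
    · simp only [subst, if_pos hy] at hz
      subst hy
      simp only [subst, fv, Finset.mem_union, Finset.mem_sdiff,
        Finset.mem_singleton] at hz ⊢
      rcases hz with hz | hz
      · rcases ih z hz with h | h <;> tauto
      · tauto
    · simp only [subst, if_neg hy] at hz
      simp only [subst, fv, Finset.mem_union, Finset.mem_sdiff,
        Finset.mem_singleton] at hz ⊢
      rcases hz with hz | ⟨hz1, hz2⟩
      · rcases ih z hz with h | h <;> tauto
      · rcases ih' z hz1 with h | h <;> tauto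

theorem step_fv {M M' : Tm} (h : Step M M') : fv M' ⊆ fv M := by
  induction h with
  | @beta x α M V _ =>
    intro z hz
    have := fv_subst_mem x V M z hz
    simp [fv]; tauto
  | @betaFix g x α β M V _ =>
    intro z hz
    have h1 := fv_subst_mem x V (subst g (.fix g x α β M) M) z hz
    simp [fv]
    rcases h1 with ⟨h1, h1x⟩ | h1
    · have h2 := fv_subst_mem g (.fix g x α β M) M z h1
      simp [fv] at h2; tauto
    · tauto
  | iteT => intro z hz; simp [fv]; tauto
  | iteF => intro z hz; simp [fv]; tauto
  | addC => intro z hz; simp [fv] at hz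
  | @letqQ x M N =>
    intro z hz
    have := fv_subst_mem x M N z hz
    simp [fv]; tauto
  | appL _ ih => intro z hz; simp [fv] at hz ⊢; have := @ih z; tauto
  | appR _ _ ih => intro z hz; simp [fv] at hz ⊢; have := @ih z; tauto
  | addL _ ih => intro z hz; simp [fv] at hz ⊢; have := @ih z; tauto
  | addR _ _ ih => intro z hz; simp [fv] at hz ⊢; have := @ih z; tauto
  | ifteC _ ih => intro z hz; simp [fv] at hz ⊢; have := @ih z; tauto
  | letqL _ ih => intro z hz; simp [fv] at hz ⊢; have := @ih z; tauto

theorem conv_of_value {V : Tm} (h : IsValue V) : Conv V :=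
  ⟨V, Relation.ReflTransGen.refl, h⟩

theorem div_step {M M' : Tm} (hs : Step M M') (hd : Div M) : Div M' := by
  rintro ⟨V, hV, hv⟩
  exact hd ⟨V, Relation.ReflTransGen.head hs hV, hv⟩

theorem div_not_value {M : Tm} (hd : Div M) (hv : IsValue M) : False :=
  hd (conv_of_value hv)

/-- Typed terms have free variables in the domain of the contexts. -/
theorem types_fv {Γ Δ : Env} {M : Tm} {α : Ty} (h : Types Γ Δ M α) :
    ∀ x ∈ fv M, (Γ x).isSome ∨ (Δ x).isSome := by
  induction h with
  | @varN Γ Δ x α hx => intro y hy; simp [fv] at hy; subst hy; left; simp [hx]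
  | @varM Γ Δ x α hx => intro y hy; simp [fv] at hy; subst hy; right; simp [hx]
  | cunit => intro y hy; simp [fv] at hy
  | cbool => intro y hy; simp [fv] at hy
  | cint => intro y hy; simp [fv] at hy
  | @lam Γ Δ x α β M _ ih =>
    intro y hy; simp [fv] at hy
    have := ih y hy.1
    simp [Env.update, hy.2] at this
    exact this
  | @fix Γ Δ g x α β M _ ih =>
    intro y hy; simp [fv] at hy
    have := ih y hy.1
    simp [Env.update, hy.2.1, hy.2.2] at this
    exact this
  | @app Γ Δ M N α β _ _ ih ih' =>
    intro y hy; simp [fv] at hy; rcases hy with hy | hy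
    · exact ih y hy
    · exact ih' y hy
  | @add Γ Δ M N _ _ ih ih' =>
    intro y hy; simp [fv] at hy; rcases hy with hy | hy
    · exact ih y hy
    · exact ih' y hy
  | @ifte Γ Δ M N N' α _ _ _ ih ih₁ ih₂ =>
    intro y hy; simp [fv] at hy; rcases hy with hy | hy | hy
    · exact ih y hy
    · exact ih₁ y hy
    · exact ih₂ y hy
  | @quote Γ Δ M α _ ih =>
    intro y hy; simp [fv] at hy
    have := ih y hy
    simp [Env.empty] at this
    right; exact this
  | @letq Γ Δ x M N α β _ _ ih ih' =>
    intro y hy; simp [fv] at hy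
    rcases hy with hy | ⟨hy1, hy2⟩
    · exact ih y hy
    · have := ih' y hy1
      simp [Env.update, hy2] at this
      exact this

theorem closed_fv {M : Tm} {α : Ty} (h : Closed M α) : fv M = ∅ := by
  ext x
  simp only [Finset.notMem_empty, iff_false]
  intro hx
  have := types_fv h x hx
  simp [Env.empty] at this

/-- The key relation: congruence closure of "both sides are closed and
diverging". -/
inductive R : Tm → Tm → Prop
  | base {N N'} : fv N = ∅ → fv N' = ∅ → Div N → Div N' → R N N'
  | var (x) : R (.var x) (.var x)
  | cunit : R .cunit .cunit
  | cbool (b) : R (.cbool b) (.cbool b)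
  | cint (n) : R (.cint n) (.cint n)
  | lam {M M'} (x α) : R M M' → R (.lam x α M) (.lam x α M')
  | fix {M M'} (g x α β) : R M M' → R (.fix g x α β M) (.fix g x α β M')
  | app {M M' N N'} : R M M' → R N N' → R (.app M N) (.app M' N')
  | add {M M' N N'} : R M M' → R N N' → R (.add M N) (.add M' N')
  | ifte {M M' N N' P P'} : R M M' → R N N' → R P P' →
      R (.ifte M N P) (.ifte M' N' P')
  | quote {M M'} : R M M' → R (.quote M) (.quote M')
  | letq {M M' N N'} (x) : R M M' → R N N' → R (.letq x M N) (.letq x M' N')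

theorem R.refl : ∀ M : Tm, R M M := by
  intro M
  induction M with
  | var x => exact R.var x
  | cunit => exact R.cunit
  | cbool b => exact R.cbool b
  | cint n => exact R.cint n
  | lam x α M ih => exact R.lam x α ih
  | fix g x α β M ih => exact R.fix g x α β ih
  | app M N ih ih' => exact R.app ih ih'
  | add M N ih ih' => exact R.add ih ih'
  | ifte M N N' ih ih₁ ih₂ => exact R.ifte ih ih₁ ih₂
  | quote M ih => exact R.quote ih
  | letq x M N ih ih' => exact R.letq x ih ih'

theorem R.symm {M N : Tm} (h : R M N) : R N M := by
  induction h with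
  | base h1 h2 h3 h4 => exact R.base h2 h1 h4 h3
  | var x => exact R.var x
  | cunit => exact R.cunit
  | cbool b => exact R.cbool b
  | cint n => exact R.cint n
  | lam x α _ ih => exact R.lam x α ih
  | fix g x α β _ ih => exact R.fix g x α β ih
  | app _ _ ih ih' => exact R.app ih ih'
  | add _ _ ih ih' => exact R.add ih ih'
  | ifte _ _ _ ih ih₁ ih₂ => exact R.ifte ih ih₁ ih₂
  | quote _ ih => exact R.quote ih
  | letq x _ _ ih ih' => exact R.letq x ih ih'

theorem R.value {M N : Tm} (h : R M N) (hv : IsValue M) : IsValue N := by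
  cases h with
  | base _ _ h3 _ => exact (div_not_value h3 hv).elim
  | var x => cases hv
  | cunit => exact .cunit
  | cbool b => exact .cbool b
  | cint n => exact .cint n
  | lam x α _ => exact .lam _ _ _
  | fix g x α β _ => exact .fix _ _ _ _ _
  | app _ _ => cases hv
  | add _ _ => cases hv
  | ifte _ _ _ => cases hv
  | quote _ => exact .quote _
  | letq _ _ _ => cases hv

theorem R.subst {M M' : Tm} (h : R M M') :
    ∀ {V V' : Tm} (x : ℕ), R V V' →
      R (subst x V M) (subst x V' M') := by
  induction h with
  | @base N N' h1 h2 h3 h4 =>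
    intro V V' x _
    rw [subst_fresh x V N (by simp [h1]), subst_fresh x V' N' (by simp [h2])]
    exact R.base h1 h2 h3 h4
  | var y =>
    intro V V' x hV
    by_cases hy : y = x <;> simp [PCFdp.subst, hy]
    · exact hV
    · exact R.var y
  | cunit => intro V V' x _; exact R.cunit
  | cbool b => intro V V' x _; exact R.cbool b
  | cint n => intro V V' x _; exact R.cint n
  | @lam M M' y α _ ih =>
    intro V V' x hV
    by_cases hy : y = x <;> simp [PCFdp.subst, hy]
    · exact R.lam _ _ ‹R M M'›
    · exact R.lam y α (ih x hV)
  | @fix M M' g y α β _ ih =>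
    intro V V' x hV
    by_cases hgy : g = x ∨ y = x <;> simp only [PCFdp.subst, hgy, if_pos, if_neg, not_false_iff]
    · exact R.fix _ _ _ _ ‹R M M'›
    · exact R.fix g y α β (ih x hV)
  | app _ _ ih ih' =>
    intro V V' x hV
    exact R.app (ih x hV) (ih' x hV)
  | add _ _ ih ih' =>
    intro V V' x hV
    exact R.add (ih x hV) (ih' x hV)
  | ifte _ _ _ ih ih₁ ih₂ =>
    intro V V' x hV
    exact R.ifte (ih x hV) (ih₁ x hV) (ih₂ x hV)
  | quote _ ih =>
    intro V V' x hV
    exact R.quote (ih x hV)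
  | @letq N N' P P' y _ _ ih ih' =>
    intro V V' x hV
    by_cases hy : y = x <;> simp [PCFdp.subst, hy]
    · exact R.letq _ (ih x hV) ‹R P P'›
    · exact R.letq y (ih x hV) (ih' x hV)

/-- Multi-step congruence lemmas. -/
theorem Steps.appL {M M' N : Tm} (h : Steps M M') : Steps (.app M N) (.app M' N) :=
  Relation.ReflTransGen.lift (fun t => Tm.app t N) (fun _ _ hs => Step.appL hs)  _ _ h

theorem Steps.appR {V N N' : Tm} (hV : IsValue V) (h : Steps N N') :
    Steps (.app V N) (.app V N') :=
  Relation.ReflTransGen.lift (fun t => Tm.app V t) (fun _ _ hs => Step.appR hV hs)  _ _ h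

theorem Steps.addL {M M' N : Tm} (h : Steps M M') : Steps (.add M N) (.add M' N) :=
  Relation.ReflTransGen.lift (fun t => Tm.add t N) (fun _ _ hs => Step.addL hs)  _ _ h

theorem Steps.addR {V N N' : Tm} (hV : IsValue V) (h : Steps N N') :
    Steps (.add V N) (.add V N') :=
  Relation.ReflTransGen.lift (fun t => Tm.add V t) (fun _ _ hs => Step.addR hV hs)  _ _ h

theorem Steps.ifteC {M M' N N' : Tm} (h : Steps M M') :
    Steps (.ifte M N N') (.ifte M' N N') :=
  Relation.ReflTransGen.lift (fun t => Tm.ifte t N N') (fun _ _ hs => Step.ifteC hs)  _ _ h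

theorem Steps.letqL {x : ℕ} {M M' N : Tm} (h : Steps M M') :
    Steps (.letq x M N) (.letq x M' N) :=
  Relation.ReflTransGen.lift (fun t => Tm.letq x t N) (fun _ _ hs => Step.letqL hs)  _ _ h

/-- Simulation: a step on the left can be matched (possibly by zero or more
steps) on the right, staying in `R`. -/
theorem R.sim {N₁ N₁' : Tm} (hs : Step N₁ N₁') :
    ∀ {N₂ : Tm}, R N₁ N₂ → ∃ N₂', Steps N₂ N₂' ∧ R N₁' N₂' := by
  induction hs with
  | @beta x α M V hV =>
    intro N₂ hR
    cases hR with
    | base h1 h2 h3 h4 =>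
      exact ⟨N₂, Relation.ReflTransGen.refl,
        R.base (Finset.subset_empty.mp (h1 ▸ step_fv (Step.beta hV))) h2
          (div_step (Step.beta hV) h3) h4⟩
    | app hf ha =>
      cases hf with
      | base h1 h2 h3 h4 => exact absurd (IsValue.lam x α M) (div_not_value h3)
      | lam _ _ hM =>
        rename_i M' N'
        exact ⟨_, Relation.ReflTransGen.single (Step.beta (ha.value hV)),
          hM.subst x ha⟩
  | @betaFix g x α β M V hV =>
    intro N₂ hR
    cases hR with
    | base h1 h2 h3 h4 =>
      exact ⟨N₂, Relation.ReflTransGen.refl,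
        R.base (Finset.subset_empty.mp (h1 ▸ step_fv (Step.betaFix hV))) h2
          (div_step (Step.betaFix hV) h3) h4⟩
    | app hf ha =>
      cases hf with
      | base h1 h2 h3 h4 => exact absurd (IsValue.fix g x α β M) (div_not_value h3)
      | fix _ _ _ _ hM =>
        exact ⟨_, Relation.ReflTransGen.single (Step.betaFix (ha.value hV)),
          (hM.subst g (R.fix g x α β hM)).subst x ha⟩
  | @iteT N N' =>
    intro N₂ hR
    cases hR with
    | base h1 h2 h3 h4 =>
      exact ⟨N₂, Relation.ReflTransGen.refl,
        R.base (Finset.subset_empty.mp (h1 ▸ step_fv Step.iteT)) h2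
          (div_step Step.iteT h3) h4⟩
    | ifte hc hn hn' =>
      cases hc with
      | base h1 h2 h3 h4 => exact absurd (IsValue.cbool true) (div_not_value h3)
      | cbool => exact ⟨_, Relation.ReflTransGen.single Step.iteT, hn⟩
  | @iteF N N' =>
    intro N₂ hR
    cases hR with
    | base h1 h2 h3 h4 =>
      exact ⟨N₂, Relation.ReflTransGen.refl,
        R.base (Finset.subset_empty.mp (h1 ▸ step_fv Step.iteF)) h2
          (div_step Step.iteF h3) h4⟩
    | ifte hc hn hn' =>
      cases hc with
      | base h1 h2 h3 h4 => exact absurd (IsValue.cbool false) (div_not_value h3)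
      | cbool => exact ⟨_, Relation.ReflTransGen.single Step.iteF, hn'⟩
  | @addC m n =>
    intro N₂ hR
    cases hR with
    | base h1 h2 h3 h4 =>
      exact ⟨N₂, Relation.ReflTransGen.refl,
        R.base (Finset.subset_empty.mp (h1 ▸ step_fv Step.addC)) h2
          (div_step Step.addC h3) h4⟩
    | add hm hn =>
      cases hm with
      | base h1 h2 h3 h4 => exact absurd (IsValue.cint m) (div_not_value h3)
      | cint =>
        cases hn with
        | base h1 h2 h3 h4 => exact absurd (IsValue.cint n) (div_not_value h3)
        | cint => exact ⟨_, Relation.ReflTransGen.single Step.addC, R.cint _⟩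
  | @letqQ x M N =>
    intro N₂ hR
    cases hR with
    | base h1 h2 h3 h4 =>
      exact ⟨N₂, Relation.ReflTransGen.refl,
        R.base (Finset.subset_empty.mp (h1 ▸ step_fv Step.letqQ)) h2
          (div_step Step.letqQ h3) h4⟩
    | letq _ hq hn =>
      cases hq with
      | base h1 h2 h3 h4 => exact absurd (IsValue.quote M) (div_not_value h3)
      | quote hM =>
        exact ⟨_, Relation.ReflTransGen.single Step.letqQ, hn.subst x hM⟩
  | @appL M M' N hs ih =>
    intro N₂ hR
    cases hR with
    | base h1 h2 h3 h4 =>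
      exact ⟨N₂, Relation.ReflTransGen.refl,
        R.base (Finset.subset_empty.mp (h1 ▸ step_fv (Step.appL hs))) h2
          (div_step (Step.appL hs) h3) h4⟩
    | app hf ha =>
      obtain ⟨P, hP, hPR⟩ := ih hf
      exact ⟨_, Steps.appL hP, R.app hPR ha⟩
  | @appR V N N' hV hs ih =>
    intro N₂ hR
    cases hR with
    | base h1 h2 h3 h4 =>
      exact ⟨N₂, Relation.ReflTransGen.refl,
        R.base (Finset.subset_empty.mp (h1 ▸ step_fv (Step.appR hV hs))) h2
          (div_step (Step.appR hV hs) h3) h4⟩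
    | app hf ha =>
      obtain ⟨P, hP, hPR⟩ := ih ha
      exact ⟨_, Steps.appR (hf.value hV) hP, R.app hf hPR⟩
  | @addL M M' N hs ih =>
    intro N₂ hR
    cases hR with
    | base h1 h2 h3 h4 =>
      exact ⟨N₂, Relation.ReflTransGen.refl,
        R.base (Finset.subset_empty.mp (h1 ▸ step_fv (Step.addL hs))) h2
          (div_step (Step.addL hs) h3) h4⟩
    | add hm hn =>
      obtain ⟨P, hP, hPR⟩ := ih hm
      exact ⟨_, Steps.addL hP, R.add hPR hn⟩
  | @addR V N N' hV hs ih =>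
    intro N₂ hR
    cases hR with
    | base h1 h2 h3 h4 =>
      exact ⟨N₂, Relation.ReflTransGen.refl,
        R.base (Finset.subset_empty.mp (h1 ▸ step_fv (Step.addR hV hs))) h2
          (div_step (Step.addR hV hs) h3) h4⟩
    | add hm hn =>
      obtain ⟨P, hP, hPR⟩ := ih hn
      exact ⟨_, Steps.addR (hm.value hV) hP, R.add hm hPR⟩
  | @ifteC M M' N N' hs ih =>
    intro N₂ hR
    cases hR with
    | base h1 h2 h3 h4 =>
      exact ⟨N₂, Relation.ReflTransGen.refl,
        R.base (Finset.subset_empty.mp (h1 ▸ step_fv (Step.ifteC hs))) h2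
          (div_step (Step.ifteC hs) h3) h4⟩
    | ifte hc hn hn' =>
      obtain ⟨P, hP, hPR⟩ := ih hc
      exact ⟨_, Steps.ifteC hP, R.ifte hPR hn hn'⟩
  | @letqL x M M' N hs ih =>
    intro N₂ hR
    cases hR with
    | base h1 h2 h3 h4 =>
      exact ⟨N₂, Relation.ReflTransGen.refl,
        R.base (Finset.subset_empty.mp (h1 ▸ step_fv (Step.letqL hs))) h2
          (div_step (Step.letqL hs) h3) h4⟩
    | letq _ hm hn =>
      obtain ⟨P, hP, hPR⟩ := ih hm
      exact ⟨_, Steps.letqL hP, R.letq x hPR hn⟩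

theorem R.conv {N₁ N₂ : Tm} (h : R N₁ N₂) (hc : Conv N₁) : Conv N₂ := by
  obtain ⟨V, hV, hval⟩ := hc
  induction hV using Relation.ReflTransGen.head_induction_on generalizing N₂ with
  | refl => exact conv_of_value (h.value hval)
  | head hs _ ih =>
    obtain ⟨P, hP, hPR⟩ := R.sim hs h
    obtain ⟨W, hW, hWv⟩ := ih hPR
    exact ⟨W, Relation.ReflTransGen.trans hP hW, hWv⟩

theorem R.plug {M₁ M₂ : Tm} (h : R M₁ M₂) : ∀ C : Ctx, R (C.plug M₁) (C.plug M₂) := by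
  intro C
  induction C with
  | hole => exact h
  | lamC x α C ih => exact R.lam x α ih
  | fixC g x α β C ih => exact R.fix g x α β ih
  | appL C N ih => exact R.app ih (R.refl N)
  | appR M C ih => exact R.app (R.refl M) ih
  | addL C N ih => exact R.add ih (R.refl N)
  | addR M C ih => exact R.add (R.refl M) ih
  | ifteC C N N' ih => exact R.ifte ih (R.refl N) (R.refl N')
  | ifteL M C N' ih => exact R.ifte (R.refl M) ih (R.refl N')
  | ifteR M N C ih => exact R.ifte (R.refl M) (R.refl N) ih
  | quoteC C ih => exact R.quote ih
  | letqL x C N ih => exact R.letq x ih (R.refl N)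
  | letqR x M C ih => exact R.letq x (R.refl M) ih

/-- any two closed, equally-typed diverging programs are
contextually congruent. -/
theorem diverging_closed_cong (M₁ M₂ : Tm) (α : Ty)
    (h₁ : Closed M₁ α) (h₂ : Closed M₂ α)
    (d₁ : Div M₁) (d₂ : Div M₂) :
    Cong M₁ M₂ := by
  have hR : R M₁ M₂ := R.base (closed_fv h₁) (closed_fv h₂) d₁ d₂
  exact ⟨fun C _ _ hc => (hR.plug C).conv hc,
         fun C _ _ hc => (hR.symm.plug C).conv hc⟩

end PCFdp
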